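/- Let S : H → L be a bounded injective-on-kernel-complement operator between Hilbert spaces, A : L → L a bounded operator with spectral radius ρ(A) < 1, and G : H → H a compact operator satisfying the intertwining relation A∘S = S∘G. Then ρ(G) ≤ ρ(A) < 1. -/

import Mathlib

open Filter Topology Metric

lemma exists_eigenvector_of_isCompactOperator
    {H : Type*} [NormedAddCommGroup H] [NormedSpace ℂ H] [CompleteSpace H]
    (G : H →L[ℂ] H) (hG : IsCompactOperator G) {l : ℂ} (hl : l ≠ 0)
    (hmem : l ∈ spectrum ℂ G) (hmax : spectralRadius ℂ G ≤ (‖l‖₊ : ENNReal)) :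
    ∃ h : H, h ≠ 0 ∧ G h = l • h := by
  have hnt : Nontrivial H := by
    rcases subsingleton_or_nontrivial H with hs | hs
    · exact absurd (isUnit_of_subsingleton _) (spectrum.mem_iff.mp hmem)
    · exact hs
  have hlpos : (0:ℝ) < ‖l‖ := norm_pos_iff.mpr hl
  set μ : ℕ → ℂ := fun n => l + ((n+1 : ℕ) : ℂ)⁻¹ * l with hμ
  have hμsub : ∀ n, μ n - l = ((n+1 : ℕ) : ℂ)⁻¹ * l := fun n => by simp [hμ]
  have hd : ∀ n, ‖μ n - l‖ = ‖l‖ / ((n+1:ℕ):ℝ) := by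
    intro n
    rw [hμsub, norm_mul, norm_inv]
    have h1 : ‖((n+1:ℕ):ℂ)‖ = ((n+1:ℕ):ℝ) := Complex.norm_natCast _
    rw [h1, div_eq_inv_mul]
  have hdpos : ∀ n, 0 < ‖μ n - l‖ := fun n => by
    rw [hd]; positivity
  have hres : ∀ n, μ n ∈ resolventSet ℂ G := by
    intro n
    apply spectrum.mem_resolventSet_of_spectralRadius_lt
    refine lt_of_le_of_lt hmax ?_
    rw [ENNReal.coe_lt_coe, ← NNReal.coe_lt_coe, coe_nnnorm, coe_nnnorm]
    have hμn : μ n = (1 + ((n+1 : ℕ) : ℂ)⁻¹) * l := by rw [hμ]; ring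
    rw [hμn, norm_mul]
    have h1 : (1:ℝ) < ‖(1 + ((n+1 : ℕ) : ℂ)⁻¹)‖ := by
      have hc : (1 + ((n+1 : ℕ) : ℂ)⁻¹) = (((1 + ((n+1:ℕ):ℝ)⁻¹ : ℝ)) : ℂ) := by
        push_cast; ring
      rw [hc, Complex.norm_real, Real.norm_eq_abs, abs_of_pos (by positivity)]
      have h2 : (0:ℝ) < (((n+1 : ℕ)) : ℝ)⁻¹ := by positivity
      linarith
    nlinarith
  have hU : ∀ n, IsUnit (algebraMap ℂ (H →L[ℂ] H) (μ n) - G) := fun n =>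
    spectrum.mem_resolventSet_iff.mp (hres n)
  choose U hUeq using hU
  have hRlb : ∀ n, ‖((U n)⁻¹ : (H →L[ℂ] H)ˣ).1‖⁻¹ ≤ ‖μ n - l‖ := by
    intro n
    by_contra hc
    push_neg at hc
    have hnear : ‖(algebraMap ℂ (H →L[ℂ] H) l - G) - (U n).1‖
        < ‖((U n)⁻¹ : (H →L[ℂ] H)ˣ).1‖⁻¹ := by
      rw [hUeq]
      have he : (algebraMap ℂ (H →L[ℂ] H) l - G) - (algebraMap ℂ (H →L[ℂ] H) (μ n) - G)
          = algebraMap ℂ (H →L[ℂ] H) (l - μ n) := by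
        rw [map_sub]; abel
      rw [he, Algebra.algebraMap_eq_smul_one, norm_smul, norm_one, mul_one, norm_sub_rev]
      exact hc
    exact (spectrum.mem_iff.mp hmem) ((Units.ofNearby (U n) _ hnear).isUnit)
  set R : ℕ → H →L[ℂ] H := fun n => ((U n)⁻¹ : (H →L[ℂ] H)ˣ).1 with hR
  have hRpos : ∀ n, 0 < ‖R n‖ := fun n => Units.norm_pos _
  have key : ∀ n, ∃ x : H, ‖x‖ = 1 ∧ ‖G x - l • x‖ ≤ 3 * ‖μ n - l‖ := by
    intro n
    obtain ⟨y, hy1, hy2⟩ := (R n).exists_lt_apply_of_lt_opNorm (half_lt_self (hRpos n))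
    have hRy : 0 < ‖R n y‖ := lt_trans (half_pos (hRpos n)) hy2
    set c : ℂ := ((‖R n y‖ : ℝ) : ℂ)⁻¹ with hcdef
    have hcnorm : ‖c‖ = ‖R n y‖⁻¹ := by
      rw [hcdef, norm_inv, Complex.norm_real, Real.norm_eq_abs, abs_of_pos hRy]
    set x : H := c • (R n y) with hx
    have hxnorm : ‖x‖ = 1 := by
      rw [hx, norm_smul, hcnorm, inv_mul_cancel₀ hRy.ne']
    refine ⟨x, hxnorm, ?_⟩
    have happ : (algebraMap ℂ (H →L[ℂ] H) (μ n) - G) (R n y) = y := by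
      have h := congrArg (fun T : H →L[ℂ] H => T y) ((hUeq n) ▸ (U n).mul_inv)
      simpa using h
    have happ2 : μ n • x - G x = c • y := by
      have h1 : (algebraMap ℂ (H →L[ℂ] H) (μ n) - G) x = c • y := by
        rw [hx, map_smul, happ]
      rw [← h1]
      simp [ContinuousLinearMap.sub_apply, Algebra.algebraMap_eq_smul_one]
    have hb1 : ‖μ n • x - G x‖ ≤ 2 * ‖μ n - l‖ := by
      rw [happ2, norm_smul, hcnorm]
      have h3 : ‖R n y‖⁻¹ ≤ 2 * ‖R n‖⁻¹ := by
        have h4 := inv_anti₀ (half_pos (hRpos n)) hy2.le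
        rwa [show (‖R n‖ / 2)⁻¹ = 2 * ‖R n‖⁻¹ by field_simp] at h4
      have h4 : ‖R n‖⁻¹ ≤ ‖μ n - l‖ := hRlb n
      nlinarith [norm_nonneg y, hy1.le, inv_pos.mpr (hRpos n), inv_pos.mpr hRy]
    have hfin : G x - l • x = -(μ n • x - G x) + (μ n - l) • x := by
      rw [sub_smul]; abel
    rw [hfin]
    calc ‖-(μ n • x - G x) + (μ n - l) • x‖
        ≤ ‖-(μ n • x - G x)‖ + ‖(μ n - l) • x‖ := norm_add_le _ _
      _ = ‖μ n • x - G x‖ + ‖μ n - l‖ := by rw [norm_neg, norm_smul, hxnorm, mul_one]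
      _ ≤ 2 * ‖μ n - l‖ + ‖μ n - l‖ := by linarith [hb1]
      _ = 3 * ‖μ n - l‖ := by ring
  choose x hx1 hx2 using key
  obtain ⟨K, hK, hKmem⟩ := hG
  obtain ⟨δ, hδ, hball⟩ := Metric.mem_nhds_iff.mp hKmem
  set z : ℕ → H := fun n => (δ/2 : ℝ) • x n with hz
  have hznorm : ∀ n, ‖z n‖ = δ/2 := by
    intro n
    rw [hz]
    simp only
    rw [norm_smul, hx1, mul_one, Real.norm_eq_abs, abs_of_pos (half_pos hδ)]
  have hzK : ∀ n, G (z n) ∈ K := by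
    intro n
    apply hball
    rw [mem_ball_zero_iff, hznorm]
    linarith
  obtain ⟨y, hyK, φ, hφ, hφt⟩ := hK.tendsto_subseq hzK
  have htend0 : Tendsto (fun n => G (z n) - l • z n) atTop (𝓝 0) := by
    apply squeeze_zero_norm (a := fun n => (δ/2) * (3 * (‖l‖ / ((n+1:ℕ):ℝ))))
    · intro n
      have he : G (z n) - l • z n = (δ/2 : ℝ) • (G (x n) - l • x n) := by
        rw [hz]
        simp only
        rw [G.map_smul_of_tower, smul_comm l, smul_sub]
      rw [he, norm_smul, Real.norm_eq_abs, abs_of_pos (half_pos hδ)]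
      have hb := hx2 n
      rw [hd n] at hb
      exact mul_le_mul_of_nonneg_left hb (half_pos hδ).le
    · have h1 : Tendsto (fun n : ℕ => 1 / ((n+1:ℕ):ℝ)) atTop (𝓝 0) := by
        exact_mod_cast tendsto_one_div_add_atTop_nhds_zero_nat (𝕜 := ℝ)
      have h2 := h1.const_mul ((δ/2) * (3 * ‖l‖))
      rw [mul_zero] at h2
      convert h2 using 2 with n
      ring
  have htend0' : Tendsto (fun n => G (z (φ n)) - l • z (φ n)) atTop (𝓝 0) :=
    htend0.comp hφ.tendsto_atTop
  have hlz : Tendsto (fun n => l • z (φ n)) atTop (𝓝 y) := by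
    have h := hφt.sub htend0'
    simpa using h
  have hzlim : Tendsto (fun n => z (φ n)) atTop (𝓝 (l⁻¹ • y)) := by
    have h := hlz.const_smul (l⁻¹)
    simpa [inv_smul_smul₀ hl] using h
  have hGlim : Tendsto (fun n => G (z (φ n))) atTop (𝓝 (G (l⁻¹ • y))) :=
    (G.continuous.tendsto _).comp hzlim
  have hGy : G (l⁻¹ • y) = y := tendsto_nhds_unique hGlim hφt
  refine ⟨l⁻¹ • y, ?_, ?_⟩
  · have hnormlim : Tendsto (fun n => ‖z (φ n)‖) atTop (𝓝 ‖l⁻¹ • y‖) :=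
      (continuous_norm.tendsto _).comp hzlim
    have heq : ‖l⁻¹ • y‖ = δ/2 := by
      apply tendsto_nhds_unique hnormlim
      simp only [hznorm]; exact tendsto_const_nhds (x := δ/2) (f := (atTop : Filter ℕ))
    intro h0
    rw [h0, norm_zero] at heq
    linarith
  · rw [hGy, smul_inv_smul₀ hl]

theorem spectralRadius_le_of_intertwining
    {H L : Type*} [NormedAddCommGroup H] [InnerProductSpace ℂ H] [CompleteSpace H]
    [NormedAddCommGroup L] [InnerProductSpace ℂ L] [CompleteSpace L]
    (S : H →L[ℂ] L) (A : L →L[ℂ] L) (G : H →L[ℂ] H)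
    (hS : ∀ h : H, h ≠ 0 → S h ≠ 0)
    (hρA : spectralRadius ℂ A < 1)
    (hG : IsCompactOperator G)
    (hintertwine : A.comp S = S.comp G) :
    spectralRadius ℂ G ≤ spectralRadius ℂ A ∧ spectralRadius ℂ G < 1 := by
  have hmain : spectralRadius ℂ G ≤ spectralRadius ℂ A := by
    by_contra hc
    push_neg at hc
    have hne : (spectrum ℂ G).Nonempty := by
      by_contra h
      rw [Set.not_nonempty_iff_eq_empty] at h
      simp [spectralRadius, h] at hc
    obtain ⟨l, hlmem, hleq⟩ := spectrum.exists_nnnorm_eq_spectralRadius_of_nonempty hne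
    have hAlt : spectralRadius ℂ A < (‖l‖₊ : ENNReal) := hleq ▸ hc
    have hl0 : l ≠ 0 := by
      intro h0
      rw [h0] at hAlt
      simp at hAlt
    have hmax : spectralRadius ℂ G ≤ (‖l‖₊ : ENNReal) := hleq.ge
    obtain ⟨h, hh0, hGh⟩ := exists_eigenvector_of_isCompactOperator G hG hl0 hlmem hmax
    have hSh : S h ≠ 0 := hS h hh0
    have hASh : A (S h) = l • S h := by
      have hcomp := congrArg (fun T : H →L[ℂ] L => T h) hintertwine
      simp only [ContinuousLinearMap.comp_apply] at hcomp
      rw [hcomp, hGh, map_smul]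
    have hlA : l ∈ spectrum ℂ A := by
      rw [spectrum.mem_iff]
      rintro ⟨u, hu⟩
      have h0 : (algebraMap ℂ (L →L[ℂ] L) l - A) (S h) = 0 := by
        simp [Algebra.algebraMap_eq_smul_one, ContinuousLinearMap.sub_apply, hASh]
      rw [← hu] at h0
      have h1 : ((u⁻¹ : (L →L[ℂ] L)ˣ).1 * u.1) (S h) = (u⁻¹ : (L →L[ℂ] L)ˣ).1 (u.1 (S h)) := rfl
      rw [u.inv_mul, h0, map_zero] at h1
      exact hSh (by simpa using h1)
    have hle : (‖l‖₊ : ENNReal) ≤ spectralRadius ℂ A :=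
      le_iSup₂ (f := fun (k : ℂ) (_ : k ∈ spectrum ℂ A) => (‖k‖₊ : ENNReal)) l hlA
    exact absurd hle (not_le.mpr hAlt)
  exact ⟨hmain, lt_of_le_of_lt hmain hρA⟩
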